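/- Let N ≥ 1 and let k be a natural number with 1 ≤ k ≤ N. Let z_1,…,z_N be real numbers with 0 ≤ z_i ≤ 1 for all i, such that at most k of the z_i are nonzero and Σ_{i=1}^N z_i² ≥ 1 (note this also forces Σ_{i=1}^N z_i ≥ 1 since each z_i ≤ 1). Then the empirical variance v satisfies (N − k²)/N² ≤ v ≤ (Nk − 1)/N². (Paper's Proposition 2, variance bound under [1,k]-sparsity with negligible ε.) -/

import Mathlib

/-- Paper's Proposition 2, variance bound under [1,k]-sparsity with negligible ε:
if z_i ∈ [0,1], at most k of the z_i are nonzero, and the sum of their squares is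
at least 1, then the empirical variance lies in [(N-k²)/N², (Nk-1)/N²]. -/
theorem sf_feature_variance_bounds_sparse
    (N k : ℕ) (hN : 1 ≤ N) (hk1 : 1 ≤ k) (hkN : k ≤ N)
    (z : Fin N → ℝ) (hz : ∀ i, 0 ≤ z i ∧ z i ≤ 1)
    (hsparse : ({i | z i ≠ 0} : Set (Fin N)).ncard ≤ k)
    (hsumsq : 1 ≤ ∑ i, (z i) ^ 2)
    (m s v : ℝ)
    (hm : m = (∑ i, z i) / N)
    (hs : s = (∑ i, (z i) ^ 2) / N)
    (hv : v = s - m ^ 2) :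
    ((N : ℝ) - (k : ℝ) ^ 2) / (N : ℝ) ^ 2 ≤ v ∧
      v ≤ ((N : ℝ) * k - 1) / (N : ℝ) ^ 2 := by
  have hNpos : (0:ℝ) < N := by exact_mod_cast Nat.lt_of_lt_of_le Nat.zero_lt_one hN
  set S := ∑ i, z i with hS
  set Q := ∑ i, (z i) ^ 2 with hQ
  have hQS : Q ≤ S := by
    apply Finset.sum_le_sum
    intro i _
    nlinarith [(hz i).1, (hz i).2]
  have hS1 : (1:ℝ) ≤ S := le_trans hsumsq hQS
  have hSk : S ≤ (k : ℝ) := by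
    have hfilter : S = ∑ i ∈ Finset.univ.filter (fun i => z i ≠ 0), z i := by
      rw [hS, Finset.sum_filter_ne_zero]
    have hcard : (Finset.univ.filter (fun i => z i ≠ 0)).card ≤ k := by
      have : ({i | z i ≠ 0} : Set (Fin N)).ncard
          = (Finset.univ.filter (fun i => z i ≠ 0)).card := by
        rw [Set.ncard_eq_toFinset_card']
        congr 1
        ext i
        simp
      omega
    calc S = ∑ i ∈ Finset.univ.filter (fun i => z i ≠ 0), z i := hfilter
      _ ≤ ∑ _i ∈ Finset.univ.filter (fun i => z i ≠ 0), (1:ℝ) :=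
        Finset.sum_le_sum fun i _ => (hz i).2
      _ = (Finset.univ.filter (fun i => z i ≠ 0)).card := by simp
      _ ≤ (k : ℝ) := by exact_mod_cast hcard
  have hveq : v = ((N:ℝ) * Q - S ^ 2) / (N:ℝ) ^ 2 := by
    rw [hv, hs, hm]
    field_simp
  have hN2 : (0:ℝ) < (N:ℝ) ^ 2 := by positivity
  constructor
  · rw [hveq, div_le_div_iff_of_pos_right hN2]
    nlinarith [hsumsq, hSk, hS1, hNpos]
  · rw [hveq, div_le_div_iff_of_pos_right hN2]
    nlinarith [mul_le_mul_of_nonneg_left hQS hNpos.le,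
      mul_le_mul_of_nonneg_left hSk hNpos.le, hS1, hNpos]
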